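/- Let 𝕂 be an algebraically closed field of characteristic zero equipped with a rank-one valuation val : 𝕂* → ℝ such that val(m) = 0 for every nonzero integer m. Let g = ∑_{i=0}^n d_i x^i ∈ 𝕂[x] with d_0 ≠ 0 and d_n ≠ 0. Let a ∈ 𝕂 be a root of g of multiplicity m ≥ 1, and set v = val(a). Then m is strictly smaller than the cardinality of the set S(v) = {i ∈ {0,…,n} : d_i ≠ 0 and val(d_i) + i·v = min{val(d_k) + k·v : 0 ≤ k ≤ n, d_k ≠ 0}}. -/

import Mathlib

open Polynomial

/-- let `g = ∑_{i=0}^n d_i x^i` with `d_0 ≠ 0 ≠ d_n` and let `a` be a root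
of `g` of multiplicity `m ≥ 1`, `v = val(a)`. Then `m` is strictly smaller than the
cardinality of the set `S(v)` of indices `i` with `d_i ≠ 0` at which `val(d_i) + i·v`
is minimal. -/
theorem rootMultiplicity_lt_card_minimizers (𝕂 : Type*) [Field 𝕂] [IsAlgClosed 𝕂] [CharZero 𝕂]
    (val : 𝕂 → ℝ)
    (hval_mul : ∀ a b : 𝕂, a ≠ 0 → b ≠ 0 → val (a * b) = val a + val b)
    (hval_add : ∀ a b : 𝕂, a ≠ 0 → b ≠ 0 → a + b ≠ 0 → min (val a) (val b) ≤ val (a + b))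
    (hval_int : ∀ m : ℤ, m ≠ 0 → val (m : 𝕂) = 0)
    (n : ℕ) (g : 𝕂[X]) (hdeg : g.natDegree = n) (h0 : g.coeff 0 ≠ 0)
    (a : 𝕂) (ha : g.IsRoot a) :
    g.rootMultiplicity a <
      Set.ncard {i : ℕ | i ≤ n ∧ g.coeff i ≠ 0 ∧ ∀ k ≤ n, g.coeff k ≠ 0 →
          val (g.coeff i) + i * val a ≤ val (g.coeff k) + k * val a} := by
  classical
  by_contra hcon
  push_neg at hcon
  set m := g.rootMultiplicity a with hm
  set S := {i : ℕ | i ≤ n ∧ g.coeff i ≠ 0 ∧ ∀ k ≤ n, g.coeff k ≠ 0 →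
      val (g.coeff i) + i * val a ≤ val (g.coeff k) + k * val a} with hS
  have hg0 : g ≠ 0 := fun h => h0 (by simp [h])
  have ha0 : a ≠ 0 := by
    intro h
    subst h
    apply h0
    rw [coeff_zero_eq_eval_zero]
    exact ha
  have hm1 : 1 ≤ m := (rootMultiplicity_pos hg0).mpr ha
  -- basic valuation facts
  have hv1 : val 1 = 0 := by
    have := hval_int 1 one_ne_zero; simpa using this
  have hvneg : ∀ x : 𝕂, x ≠ 0 → val (-x) = val x := by
    intro x hx
    have h1 : ((-1 : ℤ) : 𝕂) = -1 := by push_cast; ring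
    have h2 := hval_mul (-1) x (by norm_num) hx
    have h3 := hval_int (-1) (by norm_num)
    rw [h1] at h3
    rw [neg_one_mul] at h2
    rw [h2, h3]; ring
  have hkey : ∀ x y : 𝕂, x ≠ 0 → y ≠ 0 → val y < val x →
      x + y ≠ 0 ∧ val (x + y) = val y := by
    intro x y hx hy hlt
    have hne : x + y ≠ 0 := by
      intro h
      have hxy : x = -y := by linear_combination h
      rw [hxy, hvneg y hy] at hlt
      exact lt_irrefl _ hlt
    refine ⟨hne, le_antisymm ?_ ?_⟩
    · have h2 : (x + y) + (-x) = y := by ring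
      have h3 := hval_add (x + y) (-x) hne (neg_ne_zero.mpr hx) (by rw [h2]; exact hy)
      rw [h2, hvneg x hx] at h3
      rcases min_cases (val (x + y)) (val x) with ⟨he, _⟩ | ⟨he, hc⟩ <;> rw [he] at h3 <;> linarith
    · have h3 := hval_add x y hx hy hne
      rwa [min_eq_right hlt.le] at h3
  have hvpow : ∀ k : ℕ, val (a ^ k) = k * val a := by
    intro k
    induction k with
    | zero => simpa using hv1
    | succ k ih =>
      rw [pow_succ, hval_mul _ _ (pow_ne_zero _ ha0) ha0, ih]
      push_cast; ring
  -- ultrametric: unique minimal term forces nonzero sum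
  have hsum_strict : ∀ (s : Finset ℕ) (t : ℕ → 𝕂) (x : 𝕂), x ≠ 0 →
      (∀ k ∈ s, t k = 0 ∨ val x < val (t k)) →
      x + ∑ k ∈ s, t k ≠ 0 ∧ val (x + ∑ k ∈ s, t k) = val x := by
    intro s
    induction s using Finset.induction_on with
    | empty => intro t x hx _; rw [Finset.sum_empty, add_zero]; exact ⟨hx, rfl⟩
    | @insert i s' hi ih =>
      intro t x hx hk
      obtain ⟨h1, h2⟩ := ih t x hx (fun k hks => hk k (Finset.mem_insert_of_mem hks))
      rw [Finset.sum_insert hi]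
      by_cases hti0 : t i = 0
      · rw [hti0, zero_add]; exact ⟨h1, h2⟩
      · have hti : val x < val (t i) := (hk i (Finset.mem_insert_self i s')).resolve_left hti0
        have hlt' : val (x + ∑ k ∈ s', t k) < val (t i) := by rw [h2]; exact hti
        obtain ⟨h3, h4⟩ := hkey (t i) (x + ∑ k ∈ s', t k) hti0 h1 hlt'
        constructor
        · intro h; apply h3; rw [← h]; ring
        · rw [show x + (t i + ∑ k ∈ s', t k) = t i + (x + ∑ k ∈ s', t k) by ring, h4, h2]
  -- the operator Θ = X * d/dx
  set Th : ℕ → 𝕂[X] := fun j => (fun p : 𝕂[X] => X * derivative p)^[j] g with hTh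
  have hThsucc : ∀ j, Th (j + 1) = X * derivative (Th j) :=
    fun j => Function.iterate_succ_apply' (fun p : 𝕂[X] => X * derivative p) j g
  have hThcoeff : ∀ (u : 𝕂[X]) (k : ℕ), (X * derivative u).coeff k = (k : 𝕂) * u.coeff k := by
    intro u k
    cases k with
    | zero => simp [mul_coeff_zero]
    | succ k => rw [coeff_X_mul, coeff_derivative]; push_cast; ring
  have hThc : ∀ (j k : ℕ), (Th j).coeff k = (k : 𝕂) ^ j * g.coeff k := by
    intro j
    induction j with
    | zero => intro k; simp [hTh]
    | succ j ih =>
      intro k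
      rw [hThsucc, hThcoeff, ih, pow_succ]
      ring
  have hstep : ∀ (t : ℕ) (u : 𝕂[X]), (X - C a) ^ t ∣ u → (X - C a) ^ (t - 1) ∣ X * derivative u := by
    intro t u hu
    rcases Nat.eq_zero_or_pos t with rfl | ht
    · simpa using one_dvd _
    obtain ⟨w, rfl⟩ := hu
    refine ⟨X * (C (t : 𝕂) * w + (X - C a) * derivative w), ?_⟩
    have hp : (X - C a : 𝕂[X]) ^ t = (X - C a) ^ (t - 1) * (X - C a) := by
      rw [← pow_succ, Nat.sub_add_cancel ht]
    rw [derivative_mul, derivative_pow, derivative_X_sub_C, hp]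
    ring
  have hdvd : ∀ j : ℕ, (X - C a) ^ (m - j) ∣ Th j := by
    intro j
    induction j with
    | zero => simpa [hTh, hm] using pow_rootMultiplicity_dvd g a
    | succ j ih =>
      have h1 := hstep (m - j) (Th j) ih
      rw [hThsucc]
      simpa [Nat.sub_sub] using h1
  have heval0 : ∀ j < m, (Th j).eval a = 0 := by
    intro j hj
    have h1 : (X - C a) ∣ Th j := by
      refine dvd_trans ?_ (hdvd j)
      exact dvd_pow_self _ (Nat.sub_ne_zero_of_lt hj)
    exact (dvd_iff_isRoot.mp h1)
  have hF : ∀ j < m, ∑ k ∈ Finset.range (n + 1), g.coeff k * (k : 𝕂) ^ j * a ^ k = 0 := by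
    intro j hj
    have hnd : (Th j).natDegree < n + 1 := by
      apply Nat.lt_succ_of_le
      apply natDegree_le_iff_coeff_eq_zero.mpr
      intro N hN
      rw [hThc, coeff_eq_zero_of_natDegree_lt (hdeg ▸ hN), mul_zero]
    calc ∑ k ∈ Finset.range (n + 1), g.coeff k * (k : 𝕂) ^ j * a ^ k
        = ∑ k ∈ Finset.range (n + 1), (Th j).coeff k * a ^ k := by
          refine Finset.sum_congr rfl fun k _ => ?_
          rw [hThc]; ring
      _ = (Th j).eval a := (eval_eq_sum_range' hnd a).symm
      _ = 0 := heval0 j hj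
  -- pick a minimizer s1
  have hSfin : S.Finite := (Set.finite_Iic n).subset fun i hi => hi.1
  have hKne : (Finset.filter (fun k => g.coeff k ≠ 0) (Finset.range (n + 1))).Nonempty :=
    ⟨0, by simp [h0]⟩
  obtain ⟨s1, hs1K, hs1min⟩ := Finset.exists_min_image _
    (fun k => val (g.coeff k) + k * val a) hKne
  simp only [Finset.mem_filter, Finset.mem_range, Nat.lt_succ_iff] at hs1K
  have hs1S : s1 ∈ S := by
    refine ⟨hs1K.1, hs1K.2, fun k hk hk0 => ?_⟩
    exact hs1min k (by simp [Finset.mem_filter, Finset.mem_range, Nat.lt_succ_iff, hk, hk0])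
  -- the erased finset T and the polynomial Q
  set T : Finset ℕ := hSfin.toFinset.erase s1 with hT
  have hs1T : s1 ∉ T := Finset.notMem_erase _ _
  have hTcard : T.card < m := by
    have h1 : hSfin.toFinset.card = S.ncard := (Set.ncard_eq_toFinset_card _ hSfin).symm
    have h2 : T.card = hSfin.toFinset.card - 1 :=
      Finset.card_erase_of_mem (hSfin.mem_toFinset.mpr hs1S)
    omega
  set Q : Polynomial ℤ := ∏ s ∈ T, (X - C (s : ℤ)) with hQ
  have hQdeg : Q.natDegree = T.card := by
    rw [hQ, natDegree_prod _ _ fun i _ => X_sub_C_ne_zero _]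
    simp only [natDegree_X_sub_C]
    simp
  have hQev : ∀ k : ℕ, Q.eval (k : ℤ) = ∏ s ∈ T, ((k : ℤ) - (s : ℤ)) := by
    intro k; simp [hQ, eval_prod]
  have hQne : ∀ k : ℕ, k ∉ T → Q.eval (k : ℤ) ≠ 0 := by
    intro k hk
    rw [hQev]
    refine Finset.prod_ne_zero_iff.mpr fun s hs => sub_ne_zero.mpr ?_
    exact fun h => hk (by rwa [Nat.cast_inj.mp h])
  have hQzero : ∀ k : ℕ, k ∈ T → Q.eval (k : ℤ) = 0 := by
    intro k hk
    rw [hQev]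
    exact Finset.prod_eq_zero hk (by simp)
  -- the term function
  set t : ℕ → 𝕂 := fun k => g.coeff k * ((Q.eval (k : ℤ) : ℤ) : 𝕂) * a ^ k with ht
  -- the sum is zero
  have hzero : ∑ k ∈ Finset.range (n + 1), t k = 0 := by
    have hexp : ∀ k ∈ Finset.range (n + 1), t k =
        ∑ j ∈ Finset.range (Q.natDegree + 1), (Q.coeff j : 𝕂) * (g.coeff k * (k : 𝕂) ^ j * a ^ k) := by
      intro k _
      rw [ht]; beta_reduce
      have hq : Q.eval (k : ℤ) = ∑ j ∈ Finset.range (Q.natDegree + 1), Q.coeff j * (k : ℤ) ^ j :=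
        eval_eq_sum_range _
      rw [hq]
      push_cast
      rw [Finset.mul_sum, Finset.sum_mul]
      exact Finset.sum_congr rfl fun j _ => by ring
    rw [Finset.sum_congr rfl hexp, Finset.sum_comm]
    refine Finset.sum_eq_zero fun j hj => ?_
    have hjm : j < m := by
      simp only [Finset.mem_range, Nat.lt_succ_iff] at hj
      omega
    rw [← Finset.mul_sum, hF j hjm, mul_zero]
  -- but the sum is nonzero: unique minimal term at s1
  have hQs1 : ((Q.eval (s1 : ℤ) : ℤ) : 𝕂) ≠ 0 := Int.cast_ne_zero.mpr (hQne s1 hs1T)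
  have hts1 : t s1 ≠ 0 := mul_ne_zero (mul_ne_zero hs1K.2 hQs1) (pow_ne_zero _ ha0)
  have hvts1 : val (t s1) = val (g.coeff s1) + s1 * val a := by
    rw [ht]; beta_reduce
    rw [hval_mul _ _ (mul_ne_zero hs1K.2 hQs1) (pow_ne_zero _ ha0),
      hval_mul _ _ hs1K.2 hQs1, hval_int _ (hQne s1 hs1T), hvpow]
    ring
  have hmem : s1 ∈ Finset.range (n + 1) := Finset.mem_range.mpr (Nat.lt_succ_of_le hs1K.1)
  have hother : ∀ k ∈ (Finset.range (n + 1)).erase s1, t k = 0 ∨ val (t s1) < val (t k) := by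
    intro k hk
    obtain ⟨hks1, hkr⟩ := Finset.mem_erase.mp hk
    rw [Finset.mem_range, Nat.lt_succ_iff] at hkr
    by_cases hck : g.coeff k = 0
    · left; rw [ht]; beta_reduce; simp [hck]
    by_cases hQk : Q.eval (k : ℤ) = 0
    · left; rw [ht]; beta_reduce; simp [hQk]
    right
    have hkT : k ∉ T := fun h => hQk (hQzero k h)
    have hkS : k ∉ S := by
      intro h
      exact hkT (Finset.mem_erase.mpr ⟨hks1, hSfin.mem_toFinset.mpr h⟩)
    have hnotmin : ¬ ∀ l ≤ n, g.coeff l ≠ 0 →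
        val (g.coeff k) + k * val a ≤ val (g.coeff l) + l * val a := by
      intro h
      exact hkS ⟨hkr, hck, h⟩
    push_neg at hnotmin
    obtain ⟨l, hln, hcl, hlk⟩ := hnotmin
    have hs1l : val (g.coeff s1) + s1 * val a ≤ val (g.coeff l) + l * val a :=
      hs1S.2.2 l hln hcl
    have hvtk : val (t k) = val (g.coeff k) + k * val a := by
      have hQk' : ((Q.eval (k : ℤ) : ℤ) : 𝕂) ≠ 0 := Int.cast_ne_zero.mpr hQk
      rw [ht]; beta_reduce
      rw [hval_mul _ _ (mul_ne_zero hck hQk') (pow_ne_zero _ ha0),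
        hval_mul _ _ hck hQk', hval_int _ hQk, hvpow]
      ring
    rw [hvts1, hvtk]
    linarith
  obtain ⟨hne, -⟩ := hsum_strict ((Finset.range (n + 1)).erase s1) t (t s1) hts1 hother
  rw [Finset.add_sum_erase _ t hmem] at hne
  exact hne hzero
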